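/- Let q ∈ ℂ \ {-1} and let P be an orthogonal projection on V⊗V such that R = -P + q(1-P) solves the Yang-Baxter equation. Then R' = -(1-P) + qP also solves the Yang-Baxter equation and is unitary with spectrum {-1, q} whenever |q| = 1 and P ≠ 0, 1. -/

import Mathlib

open Matrix Kronecker Complex

/-- The algebra `M_d ⊗ M_d` realized as matrices indexed by pairs. -/
abbrev MM (d : ℕ) := Matrix (Fin d × Fin d) (Fin d × Fin d) ℂ

/-- `R ⊗ 1` acting on the triple tensor product `ℂ^d ⊗ ℂ^d ⊗ ℂ^d`. -/
def amp1 {d : ℕ} (R : MM d) :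
    Matrix (Fin d × Fin d × Fin d) (Fin d × Fin d × Fin d) ℂ :=
  Matrix.of fun x y => R (x.1, x.2.1) (y.1, y.2.1) * (if x.2.2 = y.2.2 then 1 else 0)

/-- `1 ⊗ R` acting on the triple tensor product `ℂ^d ⊗ ℂ^d ⊗ ℂ^d`. -/
def amp2 {d : ℕ} (R : MM d) :
    Matrix (Fin d × Fin d × Fin d) (Fin d × Fin d × Fin d) ℂ :=
  Matrix.of fun x y => (if x.1 = y.1 then 1 else 0) * R (x.2.1, x.2.2) (y.2.1, y.2.2)

/-- The Yang-Baxter equation `(R⊗1)(1⊗R)(R⊗1) = (1⊗R)(R⊗1)(1⊗R)`. -/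
def YBE {d : ℕ} (R : MM d) : Prop :=
  amp1 R * amp2 R * amp1 R = amp2 R * amp1 R * amp2 R

lemma amp1_one {d : ℕ} : amp1 (1 : MM d) = 1 := by
  ext ⟨a,b,c⟩ ⟨a',b',c'⟩
  simp [amp1, Matrix.one_apply, Prod.ext_iff, and_assoc]
  aesop

lemma amp1_mul {d : ℕ} (M N : MM d) : amp1 (M * N) = amp1 M * amp1 N := by
  ext ⟨a,b,c⟩ ⟨a',b',c'⟩
  simp [amp1, Matrix.mul_apply, Fintype.sum_prod_type, mul_ite, ite_mul,
    Finset.sum_ite_eq', Finset.mul_sum, Finset.sum_mul]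

lemma amp1_smul {d : ℕ} (t : ℂ) (M : MM d) : amp1 (t • M) = t • amp1 M := by
  ext ⟨a,b,c⟩ ⟨a',b',c'⟩
  simp [amp1, mul_assoc]

lemma amp1_sub {d : ℕ} (M N : MM d) : amp1 (M - N) = amp1 M - amp1 N := by
  ext ⟨a,b,c⟩ ⟨a',b',c'⟩
  simp only [amp1, Matrix.of_apply, Matrix.sub_apply]
  split_ifs <;> ring

lemma amp1_add {d : ℕ} (M N : MM d) : amp1 (M + N) = amp1 M + amp1 N := by
  ext ⟨a,b,c⟩ ⟨a',b',c'⟩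
  simp only [amp1, Matrix.of_apply, Matrix.add_apply]
  split_ifs <;> ring

lemma amp2_one {d : ℕ} : amp2 (1 : MM d) = 1 := by
  ext ⟨a,b,c⟩ ⟨a',b',c'⟩
  simp [amp2, Matrix.one_apply, Prod.ext_iff, and_assoc]
  aesop

lemma amp2_mul {d : ℕ} (M N : MM d) : amp2 (M * N) = amp2 M * amp2 N := by
  ext ⟨a,b,c⟩ ⟨a',b',c'⟩
  simp [amp2, Matrix.mul_apply, Fintype.sum_prod_type, mul_ite, ite_mul,
    Finset.sum_ite_eq', Finset.mul_sum, Finset.sum_mul]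

lemma amp2_smul {d : ℕ} (t : ℂ) (M : MM d) : amp2 (t • M) = t • amp2 M := by
  ext ⟨a,b,c⟩ ⟨a',b',c'⟩
  simp [amp2, mul_assoc, mul_left_comm]

lemma amp2_sub {d : ℕ} (M N : MM d) : amp2 (M - N) = amp2 M - amp2 N := by
  ext ⟨a,b,c⟩ ⟨a',b',c'⟩
  simp only [amp2, Matrix.of_apply, Matrix.sub_apply]
  split_ifs <;> ring

lemma amp2_add {d : ℕ} (M N : MM d) : amp2 (M + N) = amp2 M + amp2 N := by
  ext ⟨a,b,c⟩ ⟨a',b',c'⟩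
  simp only [amp2, Matrix.of_apply, Matrix.add_apply]
  split_ifs <;> ring

lemma matrix_isUnit {n : Type*} [Fintype n] [DecidableEq n] {R : Type*} [CommRing R]
    (A B : Matrix n n R) (h : A * B = 1) : IsUnit A :=
  ⟨⟨A, B, h, mul_eq_one_comm.mp h⟩, rfl⟩

lemma ybe_flip_key {A : Type*} [Ring A] [Algebra ℂ A] (q : ℂ) (X Y : A)
    (hX : X * X = q • 1 + (q - 1) • X) (hY : Y * Y = q • 1 + (q - 1) • Y)
    (h : X * Y * X = Y * X * Y) :
    ((q-1) • 1 - X) * ((q-1) • 1 - Y) * ((q-1) • 1 - X)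
      = ((q-1) • 1 - Y) * ((q-1) • 1 - X) * ((q-1) • 1 - Y) := by
  simp only [sub_mul, mul_sub, smul_mul_assoc, mul_smul_comm, one_mul, mul_one, smul_smul,
    smul_add, smul_sub]
  rw [hX, hY, h]
  module

/-- If `R = -P + q(1-P)` solves the Yang-Baxter equation for an orthogonal projection `P`,
then the "flipped" operator `R' = -(1-P) + qP` also solves the Yang-Baxter equation, and
it is unitary with spectrum `{-1, q}` whenever `|q| = 1` and `P ≠ 0, 1`. -/
theorem flipped_Rmatrix (d : ℕ) (q : ℂ) (hq : q ≠ -1) (P : MM d)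
    (hidem : P * P = P) (hsa : Pᴴ = P)
    (hYBE : YBE (q • (1 : MM d) - (1 + q) • P)) :
    YBE (q • P - ((1 : MM d) - P)) ∧
      (‖q‖ = 1 → P ≠ 0 → P ≠ 1 →
        (q • P - ((1 : MM d) - P)) ∈ Matrix.unitaryGroup (Fin d × Fin d) ℂ ∧
          spectrum ℂ (q • P - ((1 : MM d) - P)) = {-1, q}) := by
  have hq1 : (1 : ℂ) + q ≠ 0 := by
    intro h; apply hq; linear_combination h
  -- general product formula for affine combinations of 1 and P
  have hprod : ∀ a b c e : ℂ,
      (a • (1 : MM d) + b • P) * (c • (1 : MM d) + e • P)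
        = (a*c) • (1 : MM d) + (a*e + b*c + b*e) • P := by
    intro a b c e
    simp only [add_mul, mul_add, smul_mul_assoc, mul_smul_comm, one_mul, mul_one, smul_smul,
      hidem]
    module
  set R : MM d := q • (1 : MM d) - (1 + q) • P with hRdef
  set M : MM d := q • P - ((1 : MM d) - P) with hMdef
  have hRform : R = q • (1 : MM d) + (-(1+q)) • P := by rw [hRdef]; module
  have hMform : M = (-1 : ℂ) • (1 : MM d) + (1+q) • P := by rw [hMdef]; module
  have hR2 : R * R = q • (1 : MM d) + (q - 1) • R := by
    rw [hRform, hprod]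
    module
  have hM2 : M * M = q • (1 : MM d) + (q - 1) • M := by
    rw [hMform, hprod]
    module
  have hMR : M = (q - 1) • (1 : MM d) - R := by rw [hMdef, hRdef]; module
  have hamp1 : amp1 M = (q - 1) • 1 - amp1 R := by
    rw [hMR, amp1_sub, amp1_smul, amp1_one]
  have hamp2 : amp2 M = (q - 1) • 1 - amp2 R := by
    rw [hMR, amp2_sub, amp2_smul, amp2_one]
  have hA2 : amp1 R * amp1 R = q • 1 + (q - 1) • amp1 R := by
    rw [← amp1_mul, hR2, amp1_add, amp1_smul, amp1_smul, amp1_one]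
  have hB2 : amp2 R * amp2 R = q • 1 + (q - 1) • amp2 R := by
    rw [← amp2_mul, hR2, amp2_add, amp2_smul, amp2_smul, amp2_one]
  constructor
  · show amp1 M * amp2 M * amp1 M = amp2 M * amp1 M * amp2 M
    rw [hamp1, hamp2]
    exact ybe_flip_key q (amp1 R) (amp2 R) hA2 hB2 hYBE
  · intro hnorm hP0 hP1
    have hqq : q * (starRingEnd ℂ) q = 1 := by
      rw [Complex.mul_conj]
      norm_cast
      rw [Complex.normSq_eq_norm_sq]
      simp [hnorm]
    constructor
    · -- unitarity
      rw [Matrix.mem_unitaryGroup_iff]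
      have hstar : star M = (-1 : ℂ) • (1 : MM d) + (starRingEnd ℂ (1+q)) • P := by
        rw [hMform]
        show (_ : MM d)ᴴ = _
        rw [Matrix.conjTranspose_add, Matrix.conjTranspose_smul, Matrix.conjTranspose_smul,
          Matrix.conjTranspose_one, hsa]
        simp
      rw [hstar, hMform, hprod]
      have : (-1 : ℂ) * -1 = 1 := by ring
      rw [this]
      have hc : (-1 : ℂ) * (starRingEnd ℂ) (1+q) + (1+q) * -1 + (1+q) * (starRingEnd ℂ) (1+q)
          = 0 := by
        simp only [map_add, _root_.map_one]
        linear_combination hqq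
      rw [hc]
      simp
    · -- spectrum
      have hMM : ∀ a b : ℂ, (a • (1 : MM d) + b • P) * ((1:ℂ) • (1 : MM d)) = a • 1 + b • P := by
        intro a b; simp
      ext lam
      simp only [Set.mem_insert_iff, Set.mem_singleton_iff, spectrum.mem_iff,
        Algebra.algebraMap_eq_smul_one]
      constructor
      · intro h
        by_contra hcon
        push_neg at hcon
        obtain ⟨h1, h2⟩ := hcon
        apply h
        -- lam • 1 - M = (lam+1) • 1 + (-(1+q)) • P
        have key : (lam • (1 : MM d) - M) * (((lam+1)*(q-lam))⁻¹ •
            ((q-lam) • (1 : MM d) + (-(1+q)) • P)) = 1 := by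
          have h3 : lam • (1 : MM d) - M = (lam+1) • (1 : MM d) + (-(1+q)) • P := by
            rw [hMform]; module
          rw [h3, Matrix.mul_smul, hprod]
          have hc0 : (lam+1) * (-(1+q)) + (-(1+q)) * (q-lam) + (-(1+q)) * (-(1+q)) = 0 := by
            ring
          rw [hc0]
          have hs : ((lam+1)*(q-lam)) ≠ 0 := by
            apply mul_ne_zero
            · intro h; apply h1; linear_combination h
            · intro h; apply h2; linear_combination -h
          rw [zero_smul, add_zero, smul_smul, inv_mul_cancel₀ hs, one_smul]
        exact matrix_isUnit _ _ key
      · intro h hu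
        rcases h with h | h <;> rw [h] at hu
        · -- -1 ∈ spectrum: (-1)•1 - M = -(1+q)•P
          have h3 : (-1 : ℂ) • (1 : MM d) - M = (-(1+q)) • P := by
            rw [hMform]; module
          rw [h3] at hu
          obtain ⟨u, hu'⟩ := hu
          have hinv : P * ((-(1+q)) • (↑u⁻¹ : MM d)) = 1 := by
            have := u.mul_inv
            rw [hu'] at this
            calc P * ((-(1+q)) • (↑u⁻¹ : MM d)) = ((-(1+q)) • P) * ↑u⁻¹ := by
                  rw [Matrix.smul_mul, Matrix.mul_smul]
              _ = 1 := this
          have hPunit : IsUnit P := matrix_isUnit _ _ hinv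
          apply hP1
          exact hPunit.mul_left_cancel (by rw [hidem, mul_one])
        · -- q ∈ spectrum: q•1 - M = (1+q)•(1-P)
          have h3 : q • (1 : MM d) - M = (1+q) • ((1 : MM d) - P) := by
            rw [hMform]; module
          rw [h3] at hu
          obtain ⟨u, hu'⟩ := hu
          have hinv : ((1 : MM d) - P) * ((1+q) • (↑u⁻¹ : MM d)) = 1 := by
            have := u.mul_inv
            rw [hu'] at this
            calc ((1 : MM d) - P) * ((1+q) • (↑u⁻¹ : MM d))
                = ((1+q) • ((1 : MM d) - P)) * ↑u⁻¹ := by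
                  rw [Matrix.smul_mul, Matrix.mul_smul]
              _ = 1 := this
          have hQunit : IsUnit ((1 : MM d) - P) := matrix_isUnit _ _ hinv
          have hQidem : ((1 : MM d) - P) * ((1 : MM d) - P) = (1 : MM d) - P := by
            simp only [sub_mul, mul_sub, one_mul, mul_one, hidem]
            abel
          have : (1 : MM d) - P = 1 := hQunit.mul_left_cancel (by rw [hQidem, mul_one])
          exact hP0 (sub_eq_self.mp this)
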